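/- arXiv:2304.08694 — 2 statements merged into one kernel-verified Lean document; each statement's English description precedes it below -/
import Mathlib

section
/- Let m ≥ 5, 2 ≤ ℓ ≤ m/2, 0 ≤ R ≤ (m−ℓ)/(ℓ−1), A := {0,1,m−ℓ+1,…,m}, t := C(ℓ+R,R), and g := (R+1)(m−ℓ+1)−1. Then g − m ≤ Fr_t(A) ≤ m·R − 1. -/
open Finset

lemma card_sum_eq (q S : ℕ) :
    Nat.card {f : Fin q → ℕ // ∑ i, f i = S} = (q + S - 1).choose S := by
  rw [Nat.card_congr (Sym.equivNatSumOfFintype (Fin q) S).symm, Nat.card_eq_fintype_card,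
    Sym.card_sym_eq_choose, Fintype.card_fin]

lemma card_sum_le (q S : ℕ) :
    Nat.card {f : Fin q → ℕ // ∑ i, f i ≤ S} = (q + S).choose S := by
  have e : {f : Fin q → ℕ // ∑ i, f i ≤ S} ≃ {f : Fin (q+1) → ℕ // ∑ i, f i = S} :=
  { toFun := fun f => ⟨Fin.cons (S - ∑ i, f.1 i) f.1, by
      rw [Fin.sum_univ_succ]
      simp only [Fin.cons_zero, Fin.cons_succ]
      have := f.2
      omega⟩
    invFun := fun g => ⟨Fin.tail g.1, by
      have := g.2
      rw [Fin.sum_univ_succ] at this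
      have : ∑ i : Fin q, g.1 i.succ ≤ S := by omega
      exact this⟩
    left_inv := fun f => by ext i; simp [Fin.tail]
    right_inv := fun g => by
      have := g.2
      rw [Fin.sum_univ_succ] at this
      ext i
      simp only
      have h0 : S - (∑ i : Fin q, Fin.tail g.1 i) = g.1 0 := by
        simp only [Fin.tail]; omega
      rw [h0, Fin.cons_self_tail] }
  rw [Nat.card_congr e, card_sum_eq]
  congr 1
  omega

lemma fin_restrict (q n : ℕ) (a : Fin q → ℕ) (ha : ∀ i, 1 ≤ a i) :
    Finite {v : Fin q → ℕ // ∑ i, v i * a i ≤ n} := by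
  apply Finite.of_injective (fun v => (fun i => (⟨v.1 i, by
    have h1 : v.1 i ≤ v.1 i * a i := Nat.le_mul_of_pos_right _ (ha i)
    have h2 : v.1 i * a i ≤ ∑ j, v.1 j * a j :=
      Finset.single_le_sum (f := fun j => v.1 j * a j) (fun j _ => Nat.zero_le _) (mem_univ i)
    have := v.2
    omega⟩ : Fin (n+1))))
  intro v w h
  ext i
  exact congrArg Fin.val (congrFun h i)

lemma rho_eq (m ℓ n : ℕ) :
    Nat.card {k : Fin (ℓ + 1) → ℕ //
      k 0 * 1 + (∑ i : Fin ℓ, k i.succ * (m - ℓ + 1 + i.val)) = n}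
    = Nat.card {v : Fin ℓ → ℕ // ∑ i, v i * (m - ℓ + 1 + i.val) ≤ n} := by
  apply Nat.card_congr
  refine ⟨fun k => ⟨Fin.tail k.1, ?_⟩, fun v => ⟨Fin.cons (n - ∑ i, v.1 i * (m - ℓ + 1 + i.val)) v.1, ?_⟩, ?_, ?_⟩
  · have := k.2
    simp only [Fin.tail]
    omega
  · have := v.2
    simp only [Fin.cons_zero, Fin.cons_succ]
    omega
  · intro k
    ext i
    have := k.2
    simp only
    have h0 : n - (∑ i : Fin ℓ, Fin.tail k.1 i * (m - ℓ + 1 + i.val)) = k.1 0 := by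
      simp only [Fin.tail]; omega
    rw [h0, Fin.cons_self_tail]
  · intro v
    ext i
    simp [Fin.tail]

lemma choose_lt (ℓ R : ℕ) (hl : 1 ≤ ℓ) (hR1 : 0 < R) :
    (ℓ + (R - 1)).choose (R - 1) < (ℓ + R).choose R := by
  obtain ⟨r, rfl⟩ : ∃ r, R = r + 1 := ⟨R - 1, by omega⟩
  have h : (ℓ + r).choose r < (ℓ + r + 1).choose (r + 1) := by
    rw [Nat.choose_succ_succ]
    have := Nat.choose_pos (show r + 1 ≤ ℓ + r by omega)
    simp only [Nat.succ_eq_add_one]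
    omega
  simpa [Nat.add_sub_cancel, ← add_assoc] using h



/-- Total representation function of `A = {0, 1, m−ℓ+1, …, m}`: coefficients on the
nonzero elements `1, m−ℓ+1, …, m`. -/
noncomputable def rhoA (m ℓ n : ℕ) : ℕ :=
  Nat.card {k : Fin (ℓ + 1) → ℕ //
    k 0 * 1 + (∑ i : Fin ℓ, k i.succ * (m - ℓ + 1 + i.val)) = n}

/-- For `A = {0,1,m−ℓ+1,…,m}`, `t = C(ℓ+R,R)`, `g = (R+1)(m−ℓ+1)−1`, one has
`g − m ≤ Fr_t(A) ≤ mR − 1`. -/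
theorem stmt_13 (m ℓ R : ℕ) (hm : 5 ≤ m) (hl : 2 ≤ ℓ) (hlm : 2 * ℓ ≤ m)
    (hR : (ℓ - 1) * R ≤ m - ℓ) (t : ℕ) (ht : t = (ℓ + R).choose R)
    (g : ℕ) (hg : g = (R + 1) * (m - ℓ + 1) - 1)
    (Frt : ℕ) (hFrt : Frt = sSup {n : ℕ | rhoA m ℓ n < t}) :
    g - m ≤ Frt ∧ Frt ≤ m * R - 1 := by
  have hml : ℓ ≤ m := by omega
  have ha : ∀ i : Fin ℓ, 1 ≤ m - ℓ + 1 + i.val := fun i => by omega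
  have ham : ∀ i : Fin ℓ, m - ℓ + 1 + i.val ≤ m := fun i => by
    have := i.isLt; omega
  haveI hfin : ∀ n, Finite {v : Fin ℓ → ℕ // ∑ i, v i * (m - ℓ + 1 + i.val) ≤ n} :=
    fun n => fin_restrict ℓ n _ ha
  have hrho : ∀ n, rhoA m ℓ n
      = Nat.card {v : Fin ℓ → ℕ // ∑ i, v i * (m - ℓ + 1 + i.val) ≤ n} :=
    fun n => rho_eq m ℓ n
  -- key upper bound: for n ≥ m*R, rhoA n ≥ t
  have key : ∀ n, m * R ≤ n → t ≤ rhoA m ℓ n := by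
    intro n hn
    rw [hrho, ht, ← card_sum_le ℓ R]
    haveI := hfin n
    refine Nat.card_le_card_of_injective (fun v => ⟨v.1, ?_⟩) ?_
    · calc ∑ i, v.1 i * (m - ℓ + 1 + i.val)
          ≤ ∑ i, v.1 i * m := Finset.sum_le_sum fun i _ => Nat.mul_le_mul_left _ (ham i)
        _ = (∑ i, v.1 i) * m := by rw [Finset.sum_mul]
        _ ≤ R * m := Nat.mul_le_mul_right _ v.2
        _ ≤ n := by rw [mul_comm]; exact hn
    · intro v w h
      simp only [Subtype.mk.injEq] at h
      exact Subtype.ext h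
  have bound : ∀ n ∈ {n : ℕ | rhoA m ℓ n < t}, n ≤ m * R - 1 := by
    intro n hn
    simp only [Set.mem_setOf_eq] at hn
    have h1 : n < m * R := by
      by_contra h
      exact absurd (key n (le_of_not_gt h)) (not_le.mpr hn)
    exact Nat.le_sub_one_of_lt h1
  have bdd : BddAbove {n : ℕ | rhoA m ℓ n < t} := ⟨m * R - 1, fun n hn => bound n hn⟩
  rcases Nat.eq_zero_or_pos R with hR0 | hR1
  · -- R = 0 : t = 1, set is empty
    subst hR0
    have hset : {n : ℕ | rhoA m ℓ n < t} = ∅ := by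
      ext n
      simp only [Set.mem_setOf_eq, Set.mem_empty_iff_false, iff_false, not_lt, ht,
        Nat.add_zero, Nat.choose_zero_right]
      rw [hrho]
      haveI := hfin n
      haveI : Nonempty {v : Fin ℓ → ℕ // ∑ i, v i * (m - ℓ + 1 + i.val) ≤ n} :=
        ⟨⟨fun _ => 0, by simp⟩⟩
      exact Nat.card_pos
    have hsup : sSup (∅ : Set ℕ) = 0 := by
      rw [csSup_empty]; rfl
    rw [hFrt, hset, hsup]
    constructor
    · omega
    · omega
  · -- R ≥ 1
    have hXl : ℓ + 1 ≤ m - ℓ + 1 := by omega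
    have hRX : m - ℓ + 1 ≤ R * (m - ℓ + 1) := Nat.le_mul_of_pos_left _ hR1
    have mem : R * (m - ℓ + 1) - ℓ ∈ {n : ℕ | rhoA m ℓ n < t} := by
      simp only [Set.mem_setOf_eq]
      rw [hrho, ht]
      have h1 : Nat.card {v : Fin ℓ → ℕ // ∑ i, v i * (m - ℓ + 1 + i.val) ≤ R * (m - ℓ + 1) - ℓ}
          ≤ Nat.card {f : Fin ℓ → ℕ // ∑ i, f i ≤ R - 1} := by
        haveI : Finite {f : Fin ℓ → ℕ // ∑ i, f i ≤ R - 1} := by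
          have := fin_restrict ℓ (R-1) (fun _ => 1) (fun _ => le_refl 1)
          simpa using this
        refine Nat.card_le_card_of_injective (fun v => ⟨v.1, ?_⟩) ?_
        · obtain ⟨w, hw⟩ := v
          simp only
          have hs : (∑ i, w i) * (m - ℓ + 1) ≤ ∑ i, w i * (m - ℓ + 1 + i.val) := by
            rw [Finset.sum_mul]
            exact Finset.sum_le_sum fun i _ => Nat.mul_le_mul_left _ (by omega)
          by_contra hc
          have hc' : R ≤ ∑ i, w i := by omega
          have h3 : R * (m - ℓ + 1) ≤ (∑ i, w i) * (m - ℓ + 1) :=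
            Nat.mul_le_mul_right _ hc'
          generalize hP : (∑ i, w i) * (m - ℓ + 1) = P at hs h3
          generalize hQ : R * (m - ℓ + 1) = Q at h3 hRX hw
          omega
        · intro v w h
          simp only [Subtype.mk.injEq] at h
          exact Subtype.ext h
      have h2 : Nat.card {f : Fin ℓ → ℕ // ∑ i, f i ≤ R - 1}
          = (ℓ + (R - 1)).choose (R - 1) := card_sum_le ℓ (R - 1)
      exact lt_of_le_of_lt (le_of_le_of_eq h1 h2) (choose_lt ℓ R (Nat.le_of_succ_le hl) hR1)
    have hgm : g - m = R * (m - ℓ + 1) - ℓ := by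
      have e1 : (R + 1) * (m - ℓ + 1) = R * (m - ℓ + 1) + (m - ℓ + 1) := by ring
      rw [e1] at hg
      generalize hQ : R * (m - ℓ + 1) = Q at hg hRX ⊢
      omega
    constructor
    · rw [hgm, hFrt]
      exact le_csSup bdd mem
    · rw [hFrt]
      exact bound _ (Nat.sSup_mem ⟨_, mem⟩ bdd)
end

section
/- Let a, m ≥ 2 with gcd(a,m)=1, A = {0,a,m}, and t ≥ 1. Then the number of nonnegative integers with fewer than t representations au+mv equals (t−1)am + (a−1)(m−1)/2; i.e., |E_t(A)| = (t−1)am + ½(a−1)(m−1). -/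
/-- `ρ_A(n)`: number of pairs `(u,v)` of nonnegative integers with `au + mv = n`. -/
noncomputable def rho (a m n : ℕ) : ℕ := Nat.card {p : ℕ × ℕ // a * p.1 + m * p.2 = n}

/-- The canonical residue: the unique `u ∈ [0, m)` with `a * u ≡ n (mod m)`. -/
noncomputable def u0 (a m n : ℕ) : ℕ := (((a : ZMod m))⁻¹ * (n : ZMod m)).val

section Aux

variable {a m : ℕ}

lemma aux_mul_lt {u : ℕ} (ha : 0 < a) (h : u < m) : a * u < a * m := by
  have h1 : a * (u + 1) ≤ a * m := Nat.mul_le_mul_left a (by omega)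
  have h2 : a * (u + 1) = a * u + a := by ring
  omega

lemma u0_lt (hm : 2 ≤ m) (n : ℕ) : u0 a m n < m := by
  haveI : NeZero m := ⟨by omega⟩
  exact ZMod.val_lt _

lemma u0_cong (hm : 2 ≤ m) (hcop : Nat.Coprime a m) (n : ℕ) :
    ((a * u0 a m n : ℕ) : ZMod m) = (n : ZMod m) := by
  haveI : NeZero m := ⟨by omega⟩
  have hu : IsUnit (a : ZMod m) := (ZMod.isUnit_iff_coprime a m).mpr hcop
  have h1 : ((u0 a m n : ℕ) : ZMod m) = (a : ZMod m)⁻¹ * n :=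
    ZMod.natCast_rightInverse _
  push_cast
  rw [h1, ← mul_assoc, ZMod.mul_inv_of_unit _ hu, one_mul]

lemma u0_unique (hm : 2 ≤ m) (hcop : Nat.Coprime a m) {n u : ℕ}
    (h : ((a * u : ℕ) : ZMod m) = (n : ZMod m)) : u % m = u0 a m n := by
  haveI : NeZero m := ⟨by omega⟩
  have hu : IsUnit (a : ZMod m) := (ZMod.isUnit_iff_coprime a m).mpr hcop
  have h2 : ((u : ℕ) : ZMod m) = (a : ZMod m)⁻¹ * n := by
    rw [← h]; push_cast
    rw [← mul_assoc, ZMod.inv_mul_of_unit _ hu, one_mul]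
  have h3 := congrArg ZMod.val h2
  rwa [ZMod.val_natCast] at h3

lemma rho_of_le (ha : 2 ≤ a) (hm : 2 ≤ m) (hcop : Nat.Coprime a m) {n : ℕ}
    (h : a * u0 a m n ≤ n) :
    rho a m n = (n - a * u0 a m n) / (a * m) + 1 := by
  haveI : NeZero m := ⟨by omega⟩
  have hm0 : 0 < m := by omega
  have hc : 0 < a * m := by positivity
  set u₀ := u0 a m n with hu₀def
  have hcongr : ∀ j : ℕ, a * (u₀ + j * m) ≡ n [MOD m] := by
    intro j
    have h1 : a * u₀ ≡ n [MOD m] :=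
      (ZMod.natCast_eq_natCast_iff _ _ _).mp (u0_cong hm hcop n)
    have h2 : a * (u₀ + j * m) % m = (a * u₀) % m := by
      have h3 : a * (u₀ + j * m) = a * u₀ + (a * j) * m := by ring
      rw [h3]
      exact Nat.add_mul_mod_self_right _ _ _
    exact h2.trans h1
  have hset : {p : ℕ × ℕ | a * p.1 + m * p.2 = n}
      = ↑((Finset.range ((n - a * u₀) / (a * m) + 1)).image
          (fun j => (u₀ + j * m, (n - a * (u₀ + j * m)) / m))) := by
    ext ⟨u, v⟩
    simp only [Set.mem_setOf_eq, Finset.coe_image, Set.mem_image, Finset.mem_coe,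
      Finset.mem_range]
    constructor
    · intro hp
      have hcast : ((a * u : ℕ) : ZMod m) = (n : ZMod m) := by
        have h4 : ((a * u + m * v : ℕ) : ZMod m) = (n : ZMod m) := by
          exact_mod_cast congrArg _ hp
        push_cast at h4
        simpa using h4
      have hum : u % m = u₀ := u0_unique hm hcop hcast
      have huu : u = u₀ + (u / m) * m := by
        conv_lhs => rw [← Nat.mod_add_div' u m]
        rw [hum]
      obtain ⟨j, hj⟩ : ∃ j, u = u₀ + j * m := ⟨u / m, huu⟩
      refine ⟨j, ?_, ?_⟩
      · have hau : a * u = a * u₀ + j * (a * m) := by rw [hj]; ring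
        have h1 : j * (a * m) ≤ n - a * u₀ := by omega
        exact Nat.lt_succ_of_le ((Nat.le_div_iff_mul_le hc).mpr h1)
      · have h3 : n - a * (u₀ + j * m) = m * v := by rw [← hj]; omega
        simp only [Prod.mk.injEq]
        rw [h3, Nat.mul_div_cancel_left _ hm0, ← hj]
        exact ⟨rfl, rfl⟩
    · rintro ⟨j, hj, heq⟩
      simp only [Prod.mk.injEq] at heq
      rw [← heq.1, ← heq.2]
      have hexp : a * (u₀ + j * m) = a * u₀ + j * (a * m) := by ring
      have hle : a * (u₀ + j * m) ≤ n := by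
        have h2 : j * (a * m) ≤ n - a * u₀ :=
          (Nat.le_div_iff_mul_le hc).mp (Nat.lt_succ_iff.mp hj)
        omega
      have hd : m ∣ n - a * (u₀ + j * m) := (Nat.modEq_iff_dvd' hle).mp (hcongr j)
      have h5 := Nat.mul_div_cancel' hd
      omega
  have hinj : Set.InjOn (fun j => (u₀ + j * m, (n - a * (u₀ + j * m)) / m))
      ↑(Finset.range ((n - a * u₀) / (a * m) + 1)) := by
    intro x _ y _ hxy
    have h1 : u₀ + x * m = u₀ + y * m := congrArg Prod.fst hxy
    exact Nat.eq_of_mul_eq_mul_right hm0 (by omega : x * m = y * m)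
  have hcount : rho a m n = ((Finset.range ((n - a * u₀) / (a * m) + 1)).image
      (fun j => (u₀ + j * m, (n - a * (u₀ + j * m)) / m))).card := by
    rw [rho]
    rw [show {p : ℕ × ℕ // a * p.1 + m * p.2 = n}
      = ↥{p : ℕ × ℕ | a * p.1 + m * p.2 = n} from rfl]
    rw [Nat.card_coe_set_eq, hset, Set.ncard_coe_finset]
  rw [hcount, Finset.card_image_of_injOn hinj, Finset.card_range]

lemma rho_of_lt (ha : 2 ≤ a) (hm : 2 ≤ m) (hcop : Nat.Coprime a m) {n : ℕ}
    (h : n < a * u0 a m n) : rho a m n = 0 := by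
  have hset : {p : ℕ × ℕ | a * p.1 + m * p.2 = n} = ∅ := by
    ext ⟨u, v⟩
    simp only [Set.mem_setOf_eq, Set.mem_empty_iff_false, iff_false]
    intro hp
    have hcast : ((a * u : ℕ) : ZMod m) = (n : ZMod m) := by
      have h4 : ((a * u + m * v : ℕ) : ZMod m) = (n : ZMod m) := by
        exact_mod_cast congrArg _ hp
      push_cast at h4
      simpa using h4
    have hum : u % m = u0 a m n := u0_unique hm hcop hcast
    have h1 : u0 a m n ≤ u := hum ▸ Nat.mod_le u m
    have h2 : a * u0 a m n ≤ a * u := Nat.mul_le_mul_left a h1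
    omega
  rw [rho]
  rw [show {p : ℕ × ℕ // a * p.1 + m * p.2 = n}
    = ↥{p : ℕ × ℕ | a * p.1 + m * p.2 = n} from rfl]
  rw [Nat.card_coe_set_eq, hset, Set.ncard_empty]

lemma rho_eq_zero_iff (ha : 2 ≤ a) (hm : 2 ≤ m) (hcop : Nat.Coprime a m) {n : ℕ} :
    rho a m n = 0 ↔ n < a * u0 a m n := by
  constructor
  · intro h
    by_contra hlt
    push_neg at hlt
    have h2 := rho_of_le ha hm hcop hlt
    exact Nat.succ_ne_zero _ (h2.symm.trans h)
  · exact rho_of_lt ha hm hcop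

lemma rho_split (ha : 2 ≤ a) (hm : 2 ≤ m) (hcop : Nat.Coprime a m) {n q r : ℕ}
    (hn : a * m * q + r = n) (hrc : r < a * m) :
    rho a m n = q + rho a m r := by
  have hc : 0 < a * m := by positivity
  have hu0r : u0 a m r = u0 a m n := by
    have hcast : ((r : ℕ) : ZMod m) = (n : ZMod m) := by
      rw [← hn]
      push_cast
      simp
    rw [u0, u0, hcast]
  have hu0c : a * u0 a m n < a * m := aux_mul_lt (by omega) (u0_lt hm n)
  rcases le_or_gt (a * u0 a m n) r with hle | hlt
  · -- remainder representable: rho r = 1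
    have h1 : rho a m r = 1 := by
      rw [rho_of_le ha hm hcop (by rw [hu0r]; omega), hu0r,
        Nat.div_eq_of_lt (by omega)]
    have h2 : rho a m n = (n - a * u0 a m n) / (a * m) + 1 :=
      rho_of_le ha hm hcop (by omega)
    have h3 : n - a * u0 a m n = a * m * q + (r - a * u0 a m n) := by omega
    rw [h2, h3, Nat.mul_add_div hc, Nat.div_eq_of_lt (by omega), h1]
  · -- remainder not representable: rho r = 0
    have h1 : rho a m r = 0 := rho_of_lt ha hm hcop (by rw [hu0r]; omega)
    rcases le_or_gt (a * u0 a m n) n with hle2 | hlt2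
    · rcases Nat.eq_zero_or_pos q with h0 | hq1
      · subst h0
        omega
      obtain ⟨Q, hQ⟩ : ∃ Q, q = Q + 1 := ⟨q - 1, by omega⟩
      have hcq : a * m * q = a * m * Q + a * m := by rw [hQ]; ring
      have h2 : rho a m n = (n - a * u0 a m n) / (a * m) + 1 :=
        rho_of_le ha hm hcop hle2
      have h3 : n - a * u0 a m n = a * m * Q + (a * m + r - a * u0 a m n) := by omega
      rw [h2, h3, Nat.mul_add_div hc, Nat.div_eq_of_lt (by omega), h1]
      omega
    · have h2 : rho a m n = 0 := rho_of_lt ha hm hcop hlt2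
      have hq0 : q = 0 := by
        rcases Nat.eq_zero_or_pos q with h0 | hq1
        · exact h0
        · obtain ⟨Q, hQ⟩ : ∃ Q, q = Q + 1 := ⟨q - 1, by omega⟩
          have hcq : a * m * q = a * m * Q + a * m := by rw [hQ]; ring
          omega
      rw [h2, h1, hq0]

lemma rho_le_one (ha : 2 ≤ a) (hm : 2 ≤ m) (hcop : Nat.Coprime a m) {r : ℕ}
    (hr : r < a * m) : rho a m r ≤ 1 := by
  rcases le_or_gt (a * u0 a m r) r with hle | hlt
  · rw [rho_of_le ha hm hcop hle, Nat.div_eq_of_lt (by omega)]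
  · rw [rho_of_lt ha hm hcop hlt]
    omega

lemma u0_of_pair (hm : 2 ≤ m) (hcop : Nat.Coprime a m) {u k : ℕ}
    (hu : u < m) (hle : m * (k + 1) ≤ a * u) : u0 a m (a * u - m * (k + 1)) = u := by
  have hcast : ((a * u : ℕ) : ZMod m) = ((a * u - m * (k + 1) : ℕ) : ZMod m) := by
    have h1 : a * u - m * (k + 1) + m * (k + 1) = a * u := by omega
    calc ((a * u : ℕ) : ZMod m)
        = ((a * u - m * (k + 1) + m * (k + 1) : ℕ) : ZMod m) := by rw [h1]
      _ = ((a * u - m * (k + 1) : ℕ) : ZMod m) := by push_cast; simp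
  have h2 := u0_unique hm hcop hcast
  rw [Nat.mod_eq_of_lt hu] at h2
  exact h2.symm

lemma sum_div_pair (ha : 2 ≤ a) (hm : 2 ≤ m) (hcop : Nat.Coprime a m) {u : ℕ}
    (h1 : 1 ≤ u) (h2 : u < m) : a * u / m + a * (m - u) / m = a - 1 := by
  have hm0 : 0 < m := by omega
  have hqr : m * (a * u / m) + a * u % m = a * u := Nat.div_add_mod _ _
  set q := a * u / m with hq
  set r := a * u % m with hr
  have hrm : r < m := Nat.mod_lt _ hm0
  have hr0 : r ≠ 0 := by
    intro h0
    have hdvd : m ∣ a * u := Nat.dvd_of_mod_eq_zero h0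
    have hdu : m ∣ u := (Nat.Coprime.symm hcop).dvd_of_dvd_mul_left hdvd
    have := Nat.le_of_dvd (by omega) hdu
    omega
  have hau : a * u < a * m := aux_mul_lt (by omega) h2
  have hcomm : m * a = a * m := Nat.mul_comm m a
  have hqa : q < a := by
    by_contra hqa'
    have h3 : m * a ≤ m * q := Nat.mul_le_mul_left m (by omega)
    omega
  have key : a * (m - u) = m * (a - q - 1) + (m - r) := by
    have e1 : a * (m - u) = a * m - a * u := Nat.mul_sub a m u
    have e2 : m * (a - q - 1) = m * a - m * q - m := by
      rw [Nat.mul_sub, Nat.mul_sub, Nat.mul_one]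
    have e3 : m * (q + 1) ≤ m * a := Nat.mul_le_mul_left m (by omega)
    have e4 : m * (q + 1) = m * q + m := by ring
    omega
  rw [key, Nat.mul_add_div hm0, Nat.div_eq_of_lt (by omega)]
  omega

lemma sum_floor_eq (ha : 2 ≤ a) (hm : 2 ≤ m) (hcop : Nat.Coprime a m) :
    ∑ u ∈ Finset.range m, a * u / m = (a - 1) * (m - 1) / 2 := by
  have hS0 : ∑ u ∈ Finset.range m, a * u / m = ∑ u ∈ Finset.Ico 1 m, a * u / m := by
    rw [Finset.range_eq_Ico, Finset.sum_eq_sum_Ico_succ_bot (by omega : 0 < m)]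
    simp
  have hrefl : ∑ u ∈ Finset.Ico 1 m, a * u / m
      = ∑ u ∈ Finset.Ico 1 m, a * (m - u) / m := by
    refine Finset.sum_nbij' (fun u => m - u) (fun u => m - u) ?_ ?_ ?_ ?_ ?_
    · intro x hx
      simp only [Finset.mem_Ico] at hx ⊢
      omega
    · intro x hx
      simp only [Finset.mem_Ico] at hx ⊢
      omega
    · intro x hx
      simp only [Finset.mem_Ico] at hx
      show m - (m - x) = x
      omega
    · intro x hx
      simp only [Finset.mem_Ico] at hx
      show m - (m - x) = x
      omega
    · intro x hx
      simp only [Finset.mem_Ico] at hx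
      show a * x / m = a * (m - (m - x)) / m
      have h1 : m - (m - x) = x := by omega
      rw [h1]
  have h2S : (∑ u ∈ Finset.Ico 1 m, a * u / m) * 2 = (a - 1) * (m - 1) := by
    calc (∑ u ∈ Finset.Ico 1 m, a * u / m) * 2
        = (∑ u ∈ Finset.Ico 1 m, a * u / m)
          + (∑ u ∈ Finset.Ico 1 m, a * (m - u) / m) := by rw [← hrefl]; ring
      _ = ∑ u ∈ Finset.Ico 1 m, (a * u / m + a * (m - u) / m) := by
          rw [Finset.sum_add_distrib]
      _ = ∑ u ∈ Finset.Ico 1 m, (a - 1) := by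
          refine Finset.sum_congr rfl ?_
          intro u hu
          simp only [Finset.mem_Ico] at hu
          exact sum_div_pair ha hm hcop hu.1 hu.2
      _ = (m - 1) * (a - 1) := by
          rw [Finset.sum_const, Nat.card_Ico, smul_eq_mul]
      _ = (a - 1) * (m - 1) := by ring
  omega

lemma sylvester (ha : 2 ≤ a) (hm : 2 ≤ m) (hcop : Nat.Coprime a m) :
    ((Finset.range (a * m)).filter (fun x => rho a m x = 0)).card
      = (a - 1) * (m - 1) / 2 := by
  have hm0 : 0 < m := by omega
  have ha0 : 0 < a := by omega
  have hcard : ((Finset.range m).sigma (fun u => Finset.range (a * u / m))).card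
      = ∑ u ∈ Finset.range m, a * u / m := by
    rw [Finset.card_sigma]
    simp
  have hbij : ((Finset.range m).sigma (fun u => Finset.range (a * u / m))).card
      = ((Finset.range (a * m)).filter (fun x => rho a m x = 0)).card := by
    refine Finset.card_bij (fun p _ => a * p.1 - m * (p.2 + 1)) ?_ ?_ ?_
    · rintro ⟨u, k⟩ hp
      simp only [Finset.mem_sigma, Finset.mem_range] at hp
      obtain ⟨hu, hk⟩ := hp
      have hle : m * (k + 1) ≤ a * u :=
        (Nat.mul_comm (k + 1) m) ▸ ((Nat.le_div_iff_mul_le hm0).mp hk)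
      simp only [Finset.mem_filter, Finset.mem_range]
      have hau : a * u < a * m := aux_mul_lt ha0 hu
      constructor
      · exact lt_of_le_of_lt (Nat.sub_le _ _) hau
      · rw [rho_eq_zero_iff ha hm hcop, u0_of_pair hm hcop hu hle]
        have hpos : 0 < m * (k + 1) := Nat.mul_pos hm0 (Nat.succ_pos k)
        exact Nat.sub_lt (Nat.lt_of_lt_of_le hpos hle) hpos
    · rintro ⟨u, k⟩ hp ⟨u', k'⟩ hp' heq
      simp only [Finset.mem_sigma, Finset.mem_range] at hp hp'
      obtain ⟨hu, hk⟩ := hp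
      obtain ⟨hu', hk'⟩ := hp'
      have hle : m * (k + 1) ≤ a * u :=
        (Nat.mul_comm (k + 1) m) ▸ ((Nat.le_div_iff_mul_le hm0).mp hk)
      have hle' : m * (k' + 1) ≤ a * u' :=
        (Nat.mul_comm (k' + 1) m) ▸ ((Nat.le_div_iff_mul_le hm0).mp hk')
      have h1 : u0 a m (a * u - m * (k + 1)) = u := u0_of_pair hm hcop hu hle
      have h2 : u0 a m (a * u' - m * (k' + 1)) = u' := u0_of_pair hm hcop hu' hle'
      simp only at heq
      have huu : u = u' := by rw [← h1, ← h2, heq]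
      subst huu
      have hmk : m * (k + 1) = m * (k' + 1) := by omega
      have hkk : k = k' := by
        have := Nat.eq_of_mul_eq_mul_left hm0 hmk
        omega
      subst hkk
      rfl
    · intro n hn
      simp only [Finset.mem_filter, Finset.mem_range] at hn
      obtain ⟨hnc, hrho⟩ := hn
      rw [rho_eq_zero_iff ha hm hcop] at hrho
      have hum : u0 a m n < m := u0_lt hm n
      have hmod : n ≡ a * u0 a m n [MOD m] :=
        ((ZMod.natCast_eq_natCast_iff _ _ _).mp (u0_cong hm hcop n)).symm
      have hdvd : m ∣ a * u0 a m n - n := (Nat.modEq_iff_dvd' (by omega)).mp hmod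
      obtain ⟨d, hd⟩ := hdvd
      have hd1 : 1 ≤ d := by
        rcases Nat.eq_zero_or_pos d with h0 | h1
        · subst h0; omega
        · omega
      have hau : a * u0 a m n < a * m := aux_mul_lt ha0 hum
      have hcomm : m * a = a * m := Nat.mul_comm m a
      have hdm : d * m = m * d := Nat.mul_comm d m
      have hdlt : d ≤ a * u0 a m n / m :=
        (Nat.le_div_iff_mul_le hm0).mpr (by omega)
      refine ⟨⟨u0 a m n, d - 1⟩, ?_, ?_⟩
      · simp only [Finset.mem_sigma, Finset.mem_range]
        exact ⟨hum, Nat.lt_of_lt_of_le (by omega : d - 1 < d) hdlt⟩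
      · simp only
        have h3 : d - 1 + 1 = d := by omega
        rw [h3]
        omega
  rw [← hbij, hcard, sum_floor_eq ha hm hcop]

end Aux

/-- `|E_t({0,a,m})| = (t−1)am + (a−1)(m−1)/2` for coprime `a, m ≥ 2`. -/
theorem stmt_18 (a m : ℕ) (ha : 2 ≤ a) (hm : 2 ≤ m) (hcop : Nat.Coprime a m)
    (t : ℕ) (ht : 1 ≤ t) :
    Nat.card {n : ℕ | rho a m n < t}
      = (t - 1) * a * m + (a - 1) * (m - 1) / 2 := by
  have hc : 0 < a * m := by positivity
  set NR := (Finset.range (a * m)).filter (fun x => rho a m x = 0) with hNR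
  set Efin := Finset.range ((t - 1) * (a * m)) ∪ NR.image (· + (t - 1) * (a * m))
    with hEfin
  have hmem : ∀ n : ℕ, rho a m n < t ↔ n ∈ Efin := by
    intro n
    obtain ⟨q, r, hn, hrc, hqd, hrd⟩ :
        ∃ q r, a * m * q + r = n ∧ r < a * m ∧ q = n / (a * m) ∧ r = n % (a * m) :=
      ⟨n / (a * m), n % (a * m), Nat.div_add_mod n (a * m), Nat.mod_lt _ hc, rfl, rfl⟩
    have hdm : rho a m n = q + rho a m r := rho_split ha hm hcop hn hrc
    have hrho1 : rho a m r ≤ 1 := rho_le_one ha hm hcop hrc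
    simp only [hEfin, Finset.mem_union, Finset.mem_range, Finset.mem_image,
      Finset.mem_filter, hNR]
    constructor
    · intro hlt
      rcases lt_or_ge n ((t - 1) * (a * m)) with h1 | h1
      · exact Or.inl h1
      · have hq1 : t - 1 ≤ q := by
          rw [hqd]
          exact (Nat.le_div_iff_mul_le hc).mpr h1
        have hqt : q = t - 1 ∧ rho a m r = 0 := by omega
        refine Or.inr ⟨r, ⟨hrc, hqt.2⟩, ?_⟩
        have h5 : r + (t - 1) * (a * m) = a * m * q + r := by rw [hqt.1]; ring
        exact h5.trans hn
    · rintro (h1 | ⟨x, ⟨hxc, hx0⟩, hxn⟩)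
      · have hq2 : q < t - 1 := by
          rw [hqd]
          exact (Nat.div_lt_iff_lt_mul hc).mpr h1
        omega
      · have hq2 : n / (a * m) = t - 1 := by
          rw [← hxn, Nat.add_mul_div_right _ _ hc, Nat.div_eq_of_lt hxc]
          omega
        have hr2 : n % (a * m) = x := by
          rw [← hxn, Nat.add_mul_mod_self_right, Nat.mod_eq_of_lt hxc]
        have hqx : q = t - 1 := hqd.trans hq2
        have hrx : r = x := hrd.trans hr2
        rw [hrx] at hdm
        omega
  have hset : {n : ℕ | rho a m n < t} = ↑Efin := by
    ext n
    simp only [Set.mem_setOf_eq, Finset.mem_coe]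
    exact hmem n
  rw [show Nat.card {n : ℕ | rho a m n < t}
    = Nat.card ↥{n : ℕ | rho a m n < t} from rfl]
  rw [hset, Nat.card_coe_set_eq, Set.ncard_coe_finset]
  have hdisj : Disjoint (Finset.range ((t - 1) * (a * m)))
      (NR.image (· + (t - 1) * (a * m))) := by
    rw [Finset.disjoint_left]
    intro x hx hx'
    simp only [Finset.mem_range] at hx
    simp only [Finset.mem_image] at hx'
    obtain ⟨y, _, hy⟩ := hx'
    omega
  rw [hEfin, Finset.card_union_of_disjoint hdisj, Finset.card_range,
    Finset.card_image_of_injective _ (add_left_injective _)]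
  have hNRcard : NR.card = (a - 1) * (m - 1) / 2 := sylvester ha hm hcop
  rw [hNRcard, ← Nat.mul_assoc]
end
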